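/- There exists a real number t with 0.71 < t < 0.72 such that 1/2 − 1/(2^{it} − 1) + 1/(3^{it} − 1) + 1/(5^{it} − 1) = 0; in particular, the function z ↦ 1/2 − 1/(2^z − 1) + 1/(3^z − 1) + 1/(5^z − 1) has a purely imaginary zero (numerically z ≈ ±0.719409·i). -/

import Mathlib

open Real

private lemma aux_nonneg (f f' : ℝ → ℝ) (h0 : f 0 = 0)
    (hd : ∀ x, HasDerivAt f (f' x) x) (hp : ∀ x, 0 ≤ x → 0 ≤ f' x) :
    ∀ x, 0 ≤ x → 0 ≤ f x := by
  intro x hx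
  have mono : MonotoneOn f (Set.Ici (0:ℝ)) := by
    apply monotoneOn_of_deriv_nonneg (convex_Ici 0)
      (fun y _ => (hd y).differentiableAt.continuousAt.continuousWithinAt)
      (fun y hy => (hd y).differentiableAt.differentiableWithinAt)
    intro y hy
    rw [(hd y).deriv]
    exact hp y (le_of_lt (by simpa using hy))
  calc (0:ℝ) = f 0 := h0.symm
  _ ≤ f x := mono (by simp) (by simpa using hx) hx

private lemma sin_ge2 {x : ℝ} (hx : 0 ≤ x) : x - x^3/6 ≤ Real.sin x := by
  have := aux_nonneg (fun x => Real.sin x - (x - x^3/6))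
    (fun x => Real.cos x - (1 - x^2/2)) (by norm_num)
    (fun x => by
      have h := ((Real.hasDerivAt_sin x).sub (((hasDerivAt_id x).sub
        ((hasDerivAt_pow 3 x).div_const 6))))
      refine h.congr_deriv ?_; push_cast; ring)
    (fun x _ => by nlinarith [Real.one_sub_sq_div_two_le_cos (x := x)]) x hx
  linarith

private lemma cos_le3 {x : ℝ} (hx : 0 ≤ x) : Real.cos x ≤ 1 - x^2/2 + x^4/24 := by
  have := aux_nonneg (fun x => (1 - x^2/2 + x^4/24) - Real.cos x)
    (fun x => Real.sin x - (x - x^3/6)) (by norm_num)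
    (fun x => by
      have h := ((((hasDerivAt_const x (1:ℝ)).sub ((hasDerivAt_pow 2 x).div_const 2)).add
        ((hasDerivAt_pow 4 x).div_const 24)).sub (Real.hasDerivAt_cos x))
      refine h.congr_deriv ?_; push_cast; ring)
    (fun x hx => by linarith [sin_ge2 hx]) x hx
  linarith

private lemma sin_le4 {x : ℝ} (hx : 0 ≤ x) : Real.sin x ≤ x - x^3/6 + x^5/120 := by
  have := aux_nonneg (fun x => (x - x^3/6 + x^5/120) - Real.sin x)
    (fun x => (1 - x^2/2 + x^4/24) - Real.cos x) (by norm_num)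
    (fun x => by
      have h := ((((hasDerivAt_id x).sub ((hasDerivAt_pow 3 x).div_const 6)).add
        ((hasDerivAt_pow 5 x).div_const 120)).sub (Real.hasDerivAt_sin x))
      refine h.congr_deriv ?_; push_cast; ring)
    (fun x hx => by linarith [cos_le3 hx]) x hx
  linarith

private lemma cos_ge5 {x : ℝ} (hx : 0 ≤ x) : 1 - x^2/2 + x^4/24 - x^6/720 ≤ Real.cos x := by
  have := aux_nonneg (fun x => Real.cos x - (1 - x^2/2 + x^4/24 - x^6/720))
    (fun x => (x - x^3/6 + x^5/120) - Real.sin x) (by norm_num)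
    (fun x => by
      have h := ((Real.hasDerivAt_cos x).sub ((((hasDerivAt_const x (1:ℝ)).sub
        ((hasDerivAt_pow 2 x).div_const 2)).add ((hasDerivAt_pow 4 x).div_const 24)).sub
        ((hasDerivAt_pow 6 x).div_const 720)))
      refine h.congr_deriv ?_; push_cast; ring)
    (fun x hx => by linarith [sin_le4 hx]) x hx
  linarith

private lemma sin_ge6 {x : ℝ} (hx : 0 ≤ x) :
    x - x^3/6 + x^5/120 - x^7/5040 ≤ Real.sin x := by
  have := aux_nonneg (fun x => Real.sin x - (x - x^3/6 + x^5/120 - x^7/5040))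
    (fun x => Real.cos x - (1 - x^2/2 + x^4/24 - x^6/720)) (by norm_num)
    (fun x => by
      have h := ((Real.hasDerivAt_sin x).sub ((((hasDerivAt_id x).sub
        ((hasDerivAt_pow 3 x).div_const 6)).add ((hasDerivAt_pow 5 x).div_const 120)).sub
        ((hasDerivAt_pow 7 x).div_const 5040)))
      refine h.congr_deriv ?_; push_cast; ring)
    (fun x hx => by linarith [cos_ge5 hx]) x hx
  linarith

private lemma cos_le7 {x : ℝ} (hx : 0 ≤ x) :
    Real.cos x ≤ 1 - x^2/2 + x^4/24 - x^6/720 + x^8/40320 := by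
  have := aux_nonneg (fun x => (1 - x^2/2 + x^4/24 - x^6/720 + x^8/40320) - Real.cos x)
    (fun x => Real.sin x - (x - x^3/6 + x^5/120 - x^7/5040)) (by norm_num)
    (fun x => by
      have h := (((((hasDerivAt_const x (1:ℝ)).sub ((hasDerivAt_pow 2 x).div_const 2)).add
        ((hasDerivAt_pow 4 x).div_const 24)).sub ((hasDerivAt_pow 6 x).div_const 720)).add
        ((hasDerivAt_pow 8 x).div_const 40320)).sub (Real.hasDerivAt_cos x)
      refine h.congr_deriv ?_; push_cast; ring)
    (fun x hx => by linarith [sin_ge6 hx]) x hx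
  linarith

private lemma log_three_bounds : 1.098612276 < Real.log 3 ∧ Real.log 3 < 1.09861230 := by
  have z := Real.abs_log_sub_add_sum_range_le (x := 1/3) (by rw [abs_of_pos] <;> norm_num) 16
  rw [abs_of_pos (by norm_num : (0:ℝ) < 1/3)] at z
  rw [show (1 - 1/3 : ℝ) = 2/3 by norm_num,
    Real.log_div (by norm_num) (by norm_num), abs_le] at z
  simp_rw [Finset.sum_range_succ, Finset.sum_range_zero] at z
  norm_num at z
  obtain ⟨z1, z2⟩ := z
  constructor <;> nlinarith [Real.log_two_gt_d9, Real.log_two_lt_d9]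

private lemma log_five_bounds : 1.609437910 < Real.log 5 ∧ Real.log 5 < 1.609437914 := by
  have z := Real.abs_log_sub_add_sum_range_le (x := 1/5) (by rw [abs_of_pos] <;> norm_num) 12
  rw [abs_of_pos (by norm_num : (0:ℝ) < 1/5)] at z
  rw [show (1 - 1/5 : ℝ) = 4/5 by norm_num,
    Real.log_div (by norm_num) (by norm_num), abs_le,
    show (4:ℝ) = 2^2 by norm_num, Real.log_pow] at z
  simp_rw [Finset.sum_range_succ, Finset.sum_range_zero] at z
  norm_num at z
  obtain ⟨z1, z2⟩ := z
  constructor <;> nlinarith [Real.log_two_gt_d9, Real.log_two_lt_d9]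

private lemma key_inv {h : ℝ} (hs : Real.sin h ≠ 0) :
    1 / (Complex.exp (2 * h * Complex.I) - 1)
      = -1/2 - ((Real.cos h / Real.sin h : ℝ) : ℂ)/2 * Complex.I := by
  have hsC : (Real.sin h : ℂ) ≠ 0 := by exact_mod_cast hs
  have hexp : Complex.exp (2 * (h:ℂ) * Complex.I)
      = (1 - 2 * (Real.sin h : ℂ) ^ 2) + (2 * (Real.sin h : ℂ) * (Real.cos h : ℂ)) * Complex.I := by
    rw [show (2 * (h:ℂ) * Complex.I) = ((2*h : ℝ) : ℂ) * Complex.I by push_cast; ring,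
      Complex.exp_mul_I, ← Complex.ofReal_cos, ← Complex.ofReal_sin,
      Real.cos_two_mul, Real.sin_two_mul]
    have pyth : Real.cos h ^ 2 = 1 - Real.sin h ^ 2 := by
      have := Real.sin_sq_add_cos_sq h; linarith
    rw [pyth]
    push_cast
    ring
  have pythC : (Real.sin h : ℂ) ^ 2 + (Real.cos h : ℂ) ^ 2 = 1 := by
    exact_mod_cast Real.sin_sq_add_cos_sq h
  have hmul : (-1/2 - ((Real.cos h / Real.sin h : ℝ) : ℂ)/2 * Complex.I)
      * (Complex.exp (2 * h * Complex.I) - 1) = 1 := by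
    rw [hexp, Complex.ofReal_div]
    set s := ((Real.sin h : ℝ) : ℂ) with hsdef
    set c := ((Real.cos h : ℝ) : ℂ) with hcdef
    have hI : Complex.I ^ 2 = -1 := Complex.I_sq
    field_simp
    linear_combination (2 * s) * pythC + (-2 * s * c^2) * hI
  exact (eq_one_div_of_mul_eq_one_left hmul).symm

private lemma cpow_eq_exp (a : ℝ) (ha : 0 < a) (t : ℝ) :
    ((a : ℂ)) ^ ((t:ℂ) * Complex.I) = Complex.exp (2 * ((t * Real.log a / 2 : ℝ) : ℂ) * Complex.I) := by
  have ha' : (a : ℂ) ≠ 0 := by exact_mod_cast ha.ne'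
  rw [Complex.cpow_def_of_ne_zero ha', ← Complex.ofReal_log ha.le]
  congr 1
  push_cast
  ring

private lemma cot_anti {a b : ℝ} (ha : 0 < a) (hab : a ≤ b) (hb : b ≤ 1) :
    Real.cos b / Real.sin b ≤ Real.cos a / Real.sin a := by
  have hpi := Real.pi_gt_three
  have hsa : 0 < Real.sin a := Real.sin_pos_of_pos_of_lt_pi ha (by linarith)
  have hsab : Real.sin a ≤ Real.sin b :=
    Real.sin_le_sin_of_le_of_le_pi_div_two (by linarith) (by linarith) hab
  have hcb : 0 ≤ Real.cos b :=
    Real.cos_nonneg_of_mem_Icc ⟨by linarith, by linarith⟩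
  have hcba : Real.cos b ≤ Real.cos a :=
    Real.cos_le_cos_of_nonneg_of_le_pi ha.le (by linarith) hab
  exact div_le_div₀ (le_trans hcb hcba) hcba hsa hsab

private lemma cot_upper {q : ℝ} (h0 : 0 < q) (h1 : q ≤ 1) :
    Real.cos q / Real.sin q
      ≤ (1 - q^2/2 + q^4/24 - q^6/720 + q^8/40320) / (q - q^3/6 + q^5/120 - q^7/5040) := by
  have hq2 : q^2 ≤ 1 := by nlinarith
  have hq3 : q^3 ≤ q := by nlinarith [mul_nonneg h0.le (sub_nonneg.2 hq2)]
  have hq7 : q^7 ≤ q^5 := by nlinarith [mul_nonneg (pow_nonneg h0.le 5) (sub_nonneg.2 hq2)]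
  have hq6 : q^6 ≤ q^4 := by nlinarith [mul_nonneg (pow_nonneg h0.le 4) (sub_nonneg.2 hq2)]
  have hq8 : 0 ≤ q^8 := pow_nonneg h0.le 8
  have hq5 : 0 ≤ q^5 := pow_nonneg h0.le 5
  have hq4 : 0 ≤ q^4 := pow_nonneg h0.le 4
  have hslo : 0 < q - q^3/6 + q^5/120 - q^7/5040 := by linarith
  have hcup : 0 ≤ 1 - q^2/2 + q^4/24 - q^6/720 + q^8/40320 := by linarith
  exact div_le_div₀ hcup (cos_le7 h0.le) hslo (sin_ge6 h0.le)

private lemma cot_lower {q : ℝ} (h0 : 0 < q) (h1 : q ≤ 1) :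
    (1 - q^2/2 + q^4/24 - q^6/720) / (q - q^3/6 + q^5/120) ≤ Real.cos q / Real.sin q := by
  have hpi := Real.pi_gt_three
  have hsq : 0 < Real.sin q := Real.sin_pos_of_pos_of_lt_pi h0 (by linarith)
  have hcq : 0 ≤ Real.cos q := Real.cos_nonneg_of_mem_Icc ⟨by linarith, by linarith⟩
  exact div_le_div₀ hcq (cos_ge5 h0.le) hsq (sin_le4 h0.le)

private lemma endpoint_neg :
    Real.cos (0.71 * Real.log 2 / 2) / Real.sin (0.71 * Real.log 2 / 2)
    - Real.cos (0.71 * Real.log 3 / 2) / Real.sin (0.71 * Real.log 3 / 2)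
    - Real.cos (0.71 * Real.log 5 / 2) / Real.sin (0.71 * Real.log 5 / 2) < 0 := by
  obtain ⟨l3lo, l3hi⟩ := log_three_bounds
  obtain ⟨l5lo, l5hi⟩ := log_five_bounds
  have l2lo := Real.log_two_gt_d9
  have l2hi := Real.log_two_lt_d9
  have b2 : Real.cos (0.71 * Real.log 2 / 2) / Real.sin (0.71 * Real.log 2 / 2)
      ≤ Real.cos 0.246067 / Real.sin 0.246067 :=
    cot_anti (by norm_num) (by linarith) (by linarith)
  have b3 : Real.cos 0.390008 / Real.sin 0.390008
      ≤ Real.cos (0.71 * Real.log 3 / 2) / Real.sin (0.71 * Real.log 3 / 2) :=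
    cot_anti (by linarith) (by linarith) (by norm_num)
  have b5 : Real.cos 0.571351 / Real.sin 0.571351
      ≤ Real.cos (0.71 * Real.log 5 / 2) / Real.sin (0.71 * Real.log 5 / 2) :=
    cot_anti (by linarith) (by linarith) (by norm_num)
  have n2 : Real.cos 0.246067 / Real.sin 0.246067 ≤ (3.9815785 : ℝ) :=
    (cot_upper (by norm_num) (by norm_num)).trans (by norm_num)
  have n3 : (2.4327078 : ℝ) ≤ Real.cos 0.390008 / Real.sin 0.390008 :=
    le_trans (by norm_num) (cot_lower (by norm_num) (by norm_num))
  have n5 : (1.5554975 : ℝ) ≤ Real.cos 0.571351 / Real.sin 0.571351 :=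
    le_trans (by norm_num) (cot_lower (by norm_num) (by norm_num))
  linarith

private lemma endpoint_pos :
    0 < Real.cos (0.72 * Real.log 2 / 2) / Real.sin (0.72 * Real.log 2 / 2)
    - Real.cos (0.72 * Real.log 3 / 2) / Real.sin (0.72 * Real.log 3 / 2)
    - Real.cos (0.72 * Real.log 5 / 2) / Real.sin (0.72 * Real.log 5 / 2) := by
  obtain ⟨l3lo, l3hi⟩ := log_three_bounds
  obtain ⟨l5lo, l5hi⟩ := log_five_bounds
  have l2lo := Real.log_two_gt_d9
  have l2hi := Real.log_two_lt_d9
  have b2 : Real.cos 0.249533 / Real.sin 0.249533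
      ≤ Real.cos (0.72 * Real.log 2 / 2) / Real.sin (0.72 * Real.log 2 / 2) := by
    refine cot_anti (by linarith) (by linarith) (by norm_num) |>.trans_eq rfl
  have b2' : Real.cos (0.72 * Real.log 2 / 2) / Real.sin (0.72 * Real.log 2 / 2)
      ≥ Real.cos 0.249533 / Real.sin 0.249533 :=
    cot_anti (by linarith) (by linarith) (by norm_num)
  have b3 : Real.cos (0.72 * Real.log 3 / 2) / Real.sin (0.72 * Real.log 3 / 2)
      ≤ Real.cos 0.395500 / Real.sin 0.395500 :=
    cot_anti (by norm_num) (by linarith) (by linarith)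
  have b5 : Real.cos (0.72 * Real.log 5 / 2) / Real.sin (0.72 * Real.log 5 / 2)
      ≤ Real.cos 0.579397 / Real.sin 0.579397 :=
    cot_anti (by norm_num) (by linarith) (by linarith)
  have n2 : (3.9239607 : ℝ) ≤ Real.cos 0.249533 / Real.sin 0.249533 :=
    le_trans (by norm_num) (cot_lower (by norm_num) (by norm_num))
  have n3 : Real.cos 0.395500 / Real.sin 0.395500 ≤ (2.3952162 : ℝ) :=
    (cot_upper (by norm_num) (by norm_num)).trans (by norm_num)
  have n5 : Real.cos 0.579397 / Real.sin 0.579397 ≤ (1.5283348 : ℝ) :=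
    (cot_upper (by norm_num) (by norm_num)).trans (by norm_num)
  linarith


open Complex in
theorem exists_imaginary_zero_half_two_three_five :
    ∃ t : ℝ, 0.71 < t ∧ t < 0.72 ∧
      1 / 2 - 1 / ((2 : ℂ) ^ ((t : ℂ) * I) - 1) + 1 / ((3 : ℂ) ^ ((t : ℂ) * I) - 1)
        + 1 / ((5 : ℂ) ^ ((t : ℂ) * I) - 1) = 0 := by
  obtain ⟨l3lo, l3hi⟩ := log_three_bounds
  obtain ⟨l5lo, l5hi⟩ := log_five_bounds
  have l2lo := Real.log_two_gt_d9
  have l2hi := Real.log_two_lt_d9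
  set G : ℝ → ℝ := fun t =>
    Real.cos (t * Real.log 2 / 2) / Real.sin (t * Real.log 2 / 2)
    - Real.cos (t * Real.log 3 / 2) / Real.sin (t * Real.log 3 / 2)
    - Real.cos (t * Real.log 5 / 2) / Real.sin (t * Real.log 5 / 2) with hG
  -- basic facts about the half-angles
  have harg : ∀ a : ℝ, 0 < Real.log a → Real.log a < 1.7 → ∀ t : ℝ,
      0.71 ≤ t → t ≤ 0.72 → 0 < t * Real.log a / 2 ∧ t * Real.log a / 2 ≤ 0.62 := by
    intro a hl hl' t ht1 ht2
    constructor <;> nlinarith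
  -- continuity
  have hcont : ContinuousOn G (Set.Icc 0.71 0.72) := by
    have hpi := Real.pi_gt_three
    have hterm : ∀ a : ℝ, 0 < Real.log a → Real.log a < 1.7 →
        ContinuousOn (fun t : ℝ =>
          Real.cos (t * Real.log a / 2) / Real.sin (t * Real.log a / 2))
          (Set.Icc 0.71 0.72) := by
      intro a hl hl'
      apply ContinuousOn.div
      · exact (Real.continuous_cos.comp (by continuity)).continuousOn
      · exact (Real.continuous_sin.comp (by continuity)).continuousOn
      · intro t ht
        obtain ⟨h1, h2⟩ := harg a hl hl' t ht.1 ht.2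
        exact (Real.sin_pos_of_pos_of_lt_pi h1 (by linarith)).ne'
    exact ((hterm 2 (by linarith) (by linarith)).sub
      (hterm 3 (by linarith) (by linarith))).sub (hterm 5 (by linarith) (by linarith))
  -- endpoint signs
  have hneg : G 0.71 < 0 := by rw [hG]; exact endpoint_neg
  have hpos : 0 < G 0.72 := by rw [hG]; exact endpoint_pos
  -- IVT
  have hsub := intermediate_value_Ioo (by norm_num : (0.71:ℝ) ≤ 0.72) hcont
  obtain ⟨t, htmem, htzero⟩ := hsub ⟨hneg, hpos⟩
  refine ⟨t, htmem.1, htmem.2, ?_⟩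
  -- now rewrite the complex expression
  have ht1 : (0.71:ℝ) ≤ t := le_of_lt htmem.1
  have ht2 : t ≤ (0.72:ℝ) := le_of_lt htmem.2
  have hsin : ∀ a : ℝ, 0 < Real.log a → Real.log a < 1.7 →
      Real.sin (t * Real.log a / 2) ≠ 0 := by
    intro a hl hl'
    obtain ⟨h1, h2⟩ := harg a hl hl' t ht1 ht2
    have hpi := Real.pi_gt_three
    exact (Real.sin_pos_of_pos_of_lt_pi h1 (by linarith)).ne'
  have hs2 := hsin 2 (by linarith) (by linarith)
  have hs3 := hsin 3 (by linarith) (by linarith)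
  have hs5 := hsin 5 (by linarith) (by linarith)
  have e2 : (2 : ℂ) ^ ((t : ℂ) * I) - 1
      = Complex.exp (2 * ((t * Real.log 2 / 2 : ℝ) : ℂ) * Complex.I) - 1 := by
    conv_lhs => rw [show (2:ℂ) = ((2:ℝ):ℂ) by norm_num]
    rw [cpow_eq_exp 2 (by norm_num) t]
  have e3 : (3 : ℂ) ^ ((t : ℂ) * I) - 1
      = Complex.exp (2 * ((t * Real.log 3 / 2 : ℝ) : ℂ) * Complex.I) - 1 := by
    conv_lhs => rw [show (3:ℂ) = ((3:ℝ):ℂ) by norm_num]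
    rw [cpow_eq_exp 3 (by norm_num) t]
  have e5 : (5 : ℂ) ^ ((t : ℂ) * I) - 1
      = Complex.exp (2 * ((t * Real.log 5 / 2 : ℝ) : ℂ) * Complex.I) - 1 := by
    conv_lhs => rw [show (5:ℂ) = ((5:ℝ):ℂ) by norm_num]
    rw [cpow_eq_exp 5 (by norm_num) t]
  rw [e2, e3, e5, key_inv hs2, key_inv hs3, key_inv hs5]
  have hGt : ((Real.cos (t * Real.log 2 / 2) / Real.sin (t * Real.log 2 / 2) : ℝ) : ℂ)
      - ((Real.cos (t * Real.log 3 / 2) / Real.sin (t * Real.log 3 / 2) : ℝ) : ℂ)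
      - ((Real.cos (t * Real.log 5 / 2) / Real.sin (t * Real.log 5 / 2) : ℝ) : ℂ) = 0 := by
    have : G t = 0 := htzero
    rw [hG] at this
    exact_mod_cast congrArg (fun x : ℝ => (x : ℂ)) this
  linear_combination (Complex.I / 2) * hGt
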